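/- The cycle rule: for a causal time-invariant binary stream operator T, the incremental version of the feedback operator s ↦ fix α. T(s, z⁻¹(α)) equals the feedback operator built from T^Δ: (λ s. fix α. T(s, z⁻¹(α)))^Δ = λ s. fix α. T^Δ(s, z⁻¹(α)). -/

import Mathlib

def delay {A : Type*} [AddCommGroup A] (s : ℕ → A) : ℕ → A
  | 0 => 0
  | (n + 1) => s n

def diff {A : Type*} [AddCommGroup A] (s : ℕ → A) : ℕ → A := s - delay s

def integ {A : Type*} [AddCommGroup A] (s : ℕ → A) : ℕ → A :=
  fun t => ∑ i ∈ Finset.range (t + 1), s i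

lemma integ_delay {A : Type*} [AddCommGroup A] (s : ℕ → A) :
    integ (delay s) = delay (integ s) := by
  funext t
  cases t with
  | zero => simp [integ, delay]
  | succ n =>
      show ∑ i ∈ Finset.range (n + 2), delay s i = integ s n
      rw [Finset.sum_range_succ']
      simp [integ, delay]

lemma integ_diff {A : Type*} [AddCommGroup A] (s : ℕ → A) :
    integ (diff s) = s := by
  funext t
  show ∑ i ∈ Finset.range (t + 1), (s i - delay s i) = s t
  induction t with
  | zero => simp [delay]
  | succ n ih => rw [Finset.sum_range_succ, ih]; simp [delay]

theorem incremental_cycle_rule {A : Type*} [AddCommGroup A]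
    (T : (ℕ → A) → (ℕ → A) → (ℕ → A))
    (hTcausal : ∀ (s s' u u' : ℕ → A) (t : ℕ),
      (∀ i ≤ t, s i = s' i) → (∀ i ≤ t, u i = u' i) → T s u t = T s' u' t)
    (hTti : ∀ s u : ℕ → A, T (delay s) (delay u) = delay (T s u))
    (Q₁ Q₂ : (ℕ → A) → (ℕ → A))
    (hQ₁ : ∀ s, Q₁ s = T s (delay (Q₁ s)))
    (hQ₂ : ∀ s, Q₂ s = diff (T (integ s) (integ (delay (Q₂ s))))) :
    diff ∘ Q₁ ∘ integ = Q₂ := by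
  funext s t
  -- uniqueness of fixed point of a ↦ diff (T (integ s) (integ (delay a)))
  suffices H : ∀ t, diff (Q₁ (integ s)) t = Q₂ s t from H t
  intro t
  induction t using Nat.strong_induction_on with
  | _ t ih =>
    set a := diff (Q₁ (integ s)) with ha
    -- a is also a fixed point
    have hfix : a = diff (T (integ s) (integ (delay a))) := by
      rw [ha, integ_delay, integ_diff, ← hQ₁]
    have hdel : ∀ i ≤ t, delay a i = delay (Q₂ s) i := by
      intro i hi
      cases i with
      | zero => rfl
      | succ n => exact ih n (Nat.lt_of_succ_le hi)
    have hinteg : ∀ i ≤ t, integ (delay a) i = integ (delay (Q₂ s)) i := by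
      intro i hi
      apply Finset.sum_congr rfl
      intro j hj
      exact hdel j (le_trans (Nat.lt_succ_iff.mp (Finset.mem_range.mp hj)) hi)
    have hT : ∀ i ≤ t, T (integ s) (integ (delay a)) i
        = T (integ s) (integ (delay (Q₂ s))) i := by
      intro i hi
      exact hTcausal _ _ _ _ i (fun _ _ => rfl) (fun j hj => hinteg j (le_trans hj hi))
    calc a t = diff (T (integ s) (integ (delay a))) t := by rw [← hfix]
      _ = diff (T (integ s) (integ (delay (Q₂ s)))) t := by
          show T (integ s) (integ (delay a)) t - delay (T (integ s) (integ (delay a))) t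
            = T (integ s) (integ (delay (Q₂ s))) t - delay (T (integ s) (integ (delay (Q₂ s)))) t
          rw [hT t le_rfl]
          cases t with
          | zero => rfl
          | succ n => show _ - T _ _ n = _ - T _ _ n; rw [hT n (Nat.le_succ n)]
      _ = Q₂ s t := by rw [← hQ₂]
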